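/- The poset ℙ_hom of countable homogeneous normal subtrees of ⟨2^{<ω₁}, ⊆⟩, ordered by T ≤ T' iff ht(T') ≤ ht(T) and T' = T restricted below height ht(T'), is ω₁-closed: every countable decreasing sequence has a lower bound. -/

import Mathlib

noncomputable section

/-- `ω₁` as an ordinal. -/
def omega1 : Ordinal := (Cardinal.aleph 1).ord

/-- A partial node: a partial function from ordinals into `2 = Fin 2`.
Elements of `2^{<ω₁}` are those whose domain is a (countable) ordinal. -/
abbrev PNode := Ordinal → Option (Fin 2)

/-- `u` is a function with domain `β`, i.e. `u ∈ 2^β`. -/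
def IsNode (u : PNode) (β : Ordinal) : Prop := ∀ γ, (u γ).isSome ↔ γ < β

/-- The extension (inclusion) order on partial functions. -/
def extn (u v : PNode) : Prop := ∀ γ x, u γ = some x → v γ = some x

/-- The translation map `F_{s,t}` for `s, t` of domain `α`:
`F_{s,t}(u)(γ) = u(γ) + t(γ) + s(γ) (mod 2)` for `γ < α`, and `u(γ)` otherwise. -/
def Fmap (α : Ordinal) (s t : PNode) (u : PNode) : PNode :=
  fun γ => (u γ).map (fun x => if γ < α then x + (t γ).getD 0 + (s γ).getD 0 else x)

/-- Restriction of a node below `δ`. -/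
def nrestrict (u : PNode) (δ : Ordinal) : PNode := fun γ => if γ < δ then u γ else none

/-- A subtree of `⟨2^{<ω₁}, ⊆⟩`: a set of functions with countable ordinal domains,
closed under restriction. -/
def Subtree (T : Set PNode) : Prop :=
  (∀ u ∈ T, ∃ β < omega1, IsNode u β) ∧ ∀ u ∈ T, ∀ δ, nrestrict u δ ∈ T

/-- The `α`-th level of `T`. -/
def tlevel (T : Set PNode) (α : Ordinal) : Set PNode := {u ∈ T | IsNode u α}

/-- The height of `T`: the least `α` with `T_α = ∅`. -/
def theight (T : Set PNode) : Ordinal := sInf {α | tlevel T α = ∅}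

/-- `T↾α`: the restriction of `T` below level `α`. -/
def treeRestrict (T : Set PNode) (α : Ordinal) : Set PNode := {u ∈ T | ∃ β < α, IsNode u β}

/-- Normality of a subtree of `2^{<ω₁}`: every non-top node has at least two immediate
successors; at limit levels, nodes are determined by their sets of predecessors
(unique limits); and every node has extensions at all higher levels below the height. -/
def NormalTree (T : Set PNode) : Prop :=
  (∀ u ∈ T, ∀ β, IsNode u β → β + 1 < theight T →
    ∃ v ∈ tlevel T (β + 1), ∃ w ∈ tlevel T (β + 1), v ≠ w ∧ extn u v ∧ extn u w) ∧
  (∀ α : Ordinal, Order.IsSuccLimit α → ∀ v ∈ tlevel T α, ∀ w ∈ tlevel T α,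
    {u ∈ T | extn u v ∧ u ≠ v} = {u ∈ T | extn u w ∧ u ≠ w} → v = w) ∧
  (∀ u ∈ T, ∀ β, IsNode u β → ∀ α, β ≤ α → α < theight T → ∃ v ∈ tlevel T α, extn u v)

/-- Homogeneity: for any `s, t` in the same level, `F_{s,t}` restricts to an
order isomorphism of `T` onto `T`. -/
def Homog (T : Set PNode) : Prop :=
  ∀ α : Ordinal, ∀ s ∈ tlevel T α, ∀ t ∈ tlevel T α,
    Set.BijOn (Fmap α s t) T T ∧
    ∀ u ∈ T, ∀ v ∈ T, (extn u v ↔ extn (Fmap α s t u) (Fmap α s t v))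

/-- The end-extension order on trees: `T ≤ T'` iff `ht T' ≤ ht T` and `T' = T↾ht(T')`. -/
def Tle (T T' : Set PNode) : Prop := theight T' ≤ theight T ∧ T' = treeRestrict T (theight T')

/-- The strict end-extension order on trees: `T < T'` iff `ht T' < ht T` and `T' = T↾ht(T')`. -/
def Tlt (T T' : Set PNode) : Prop := theight T' < theight T ∧ T' = treeRestrict T (theight T')

/-- The poset `ℙ_hom` of countable homogeneous normal subtrees of `2^{<ω₁}`. -/
def Phom : Set (Set PNode) := {T | T.Countable ∧ Subtree T ∧ NormalTree T ∧ Homog T}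

open Classical in
/-- The union `⋃ B` of a family of partial functions (as graphs). -/
def unionNode (B : Set PNode) : PNode :=
  fun γ => if h : ∃ x : Fin 2, ∃ u ∈ B, u γ = some x then some h.choose else none

/-- A branch of `T`: a chain meeting every nonempty level. -/
def TBranch (T B : Set PNode) : Prop :=
  B ⊆ T ∧ IsChain extn B ∧ ∀ α : Ordinal, (tlevel T α).Nonempty → (B ∩ tlevel T α).Nonempty

/-- A branch of `T↾α`: a chain in `T↾α` meeting every level below `α`. -/
def BranchBelow (T : Set PNode) (α : Ordinal) (C : Set PNode) : Prop :=
  C ⊆ treeRestrict T α ∧ IsChain extn C ∧ ∀ β < α, (C ∩ tlevel T β).Nonempty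

/-- The root: the empty function. -/
def emptyNode : PNode := fun _ => none

/-- A condition of `ℙ(T, I, ω₁)`: a function `p : I → T` with countable support. -/
def Cond (T : Set PNode) {ι : Type*} (p : ι → PNode) : Prop :=
  (∀ i, p i ∈ T) ∧ {i | p i ≠ emptyNode}.Countable

/-- The order on `ℙ(T, I, ω₁)`: `p ≤ q` iff `q(i) ≤_T p(i)` for all `i`. -/
def ple {ι : Type*} (p q : ι → PNode) : Prop := ∀ i, extn (q i) (p i)

lemma IsNode.unique {u : PNode} {β β' : Ordinal} (h : IsNode u β) (h' : IsNode u β') : β = β' := by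
  have key : ∀ {a b : Ordinal}, IsNode u a → IsNode u b → a ≤ b := by
    intro a b ha hb
    by_contra hlt; push_neg at hlt
    exact absurd ((hb b).mp ((ha b).mpr hlt)) (lt_irrefl _)
  exact le_antisymm (key h h') (key h' h)

lemma extn_le {u v : PNode} {β α : Ordinal} (h : extn u v) (hu : IsNode u β) (hv : IsNode v α) :
    β ≤ α := by
  by_contra hlt
  push_neg at hlt
  obtain ⟨x, hx⟩ := Option.isSome_iff_exists.mp ((hu α).mpr hlt)
  have h2 : (v α).isSome := by simp [h α x hx]
  exact absurd ((hv α).mp h2) (lt_irrefl _)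

lemma extn_eq {u v : PNode} {β : Ordinal} (h : extn u v) (hu : IsNode u β) (hv : IsNode v β) :
    u = v := by
  funext γ
  by_cases hγ : γ < β
  · obtain ⟨x, hx⟩ := Option.isSome_iff_exists.mp ((hu γ).mpr hγ)
    rw [hx, h γ x hx]
  · have h1 : u γ = none := Option.not_isSome_iff_eq_none.mp (by rw [hu γ]; exact hγ)
    have h2 : v γ = none := Option.not_isSome_iff_eq_none.mp (by rw [hv γ]; exact hγ)
    rw [h1, h2]

lemma extn_lt {u v : PNode} {β α : Ordinal} (h : extn u v) (hu : IsNode u β) (hv : IsNode v α)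
    (hne : u ≠ v) : β < α := by
  rcases lt_or_eq_of_le (extn_le h hu hv) with h' | h'
  · exact h'
  · exact absurd (extn_eq h hu (h' ▸ hv)) hne

lemma isNode_nrestrict {u : PNode} {β : Ordinal} (hu : IsNode u β) {δ : Ordinal} (hδ : δ ≤ β) :
    IsNode (nrestrict u δ) δ := by
  intro γ
  unfold nrestrict
  by_cases hγ : γ < δ
  · simp [hγ, (hu γ).mpr (lt_of_lt_of_le hγ hδ)]
  · simp [hγ]

lemma height_set_nonempty {T : Set PNode} (hT : Subtree T) : {α | tlevel T α = ∅}.Nonempty := by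
  refine ⟨omega1, ?_⟩
  simp only [Set.mem_setOf_eq, tlevel]
  ext v
  simp only [Set.mem_setOf_eq, Set.mem_empty_iff_false, iff_false]
  rintro ⟨hvT, hv⟩
  obtain ⟨β', hβ', hv'⟩ := hT.1 v hvT
  exact absurd (hv'.unique hv ▸ hβ') (lt_irrefl _)

lemma level_lt_height {T : Set PNode} (hT : Subtree T) {u : PNode} (hu : u ∈ T) {β : Ordinal}
    (hβ : IsNode u β) : β < theight T := by
  have hmem : theight T ∈ {α | tlevel T α = ∅} := csInf_mem (height_set_nonempty hT)
  by_contra hle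
  push_neg at hle
  have : nrestrict u (theight T) ∈ tlevel T (theight T) :=
    ⟨hT.2 u hu _, isNode_nrestrict hβ hle⟩
  rw [Set.mem_setOf_eq.mp hmem] at this
  exact this

lemma level_nonempty {T : Set PNode} {α : Ordinal} (h : α < theight T) :
    (tlevel T α).Nonempty := by
  rw [Set.nonempty_iff_ne_empty]
  intro he
  have hm : α ∈ {α | tlevel T α = ∅} := he
  exact absurd (csInf_le' hm) (not_le_of_gt h)

lemma treeRestrict_treeRestrict {T : Set PNode} {a b : Ordinal} (hab : a ≤ b) :
    treeRestrict (treeRestrict T b) a = treeRestrict T a := by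
  ext u
  constructor
  · rintro ⟨⟨huT, _⟩, hβ⟩
    exact ⟨huT, hβ⟩
  · rintro ⟨huT, β, hβa, hβ⟩
    exact ⟨⟨huT, β, lt_of_lt_of_le hβa hab, hβ⟩, β, hβa, hβ⟩

/-- `ℙ_hom` is `ω₁`-closed: every countable decreasing sequence of countable homogeneous
normal subtrees of `2^{<ω₁}` (ordered by end-extension) has a lower bound in `ℙ_hom`. -/
theorem stmt9 (f : ℕ → Set PNode) (hf : ∀ n, f n ∈ Phom)
    (hdec : ∀ n, Tle (f (n + 1)) (f n)) :
    ∃ S ∈ Phom, ∀ n, Tle S (f n) := by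
  classical
  set S := ⋃ n, f n with hSdef
  have hsub : ∀ n, Subtree (f n) := fun n => (hf n).2.1
  have hhmono : ∀ {n m : ℕ}, n ≤ m → theight (f n) ≤ theight (f m) := by
    intro n m h
    induction m, h using Nat.le_induction with
    | base => exact le_rfl
    | succ m _ ih => exact ih.trans (hdec m).1
  have hres : ∀ {n m : ℕ}, n ≤ m → f n = treeRestrict (f m) (theight (f n)) := by
    intro n m h
    induction m, h using Nat.le_induction with
    | base =>
      ext u
      constructor
      · intro hu
        obtain ⟨β, _, hβ⟩ := (hsub n).1 u hu
        exact ⟨hu, β, level_lt_height (hsub n) hu hβ, hβ⟩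
      · rintro ⟨hu, _⟩
        exact hu
    | succ m hnm ih =>
      calc f n = treeRestrict (f m) (theight (f n)) := ih
        _ = treeRestrict (treeRestrict (f (m + 1)) (theight (f m))) (theight (f n)) :=
            congrArg (fun T => treeRestrict T (theight (f n))) (hdec m).2
        _ = treeRestrict (f (m + 1)) (theight (f n)) := treeRestrict_treeRestrict (hhmono hnm)
  have hmono : ∀ {n m : ℕ}, n ≤ m → f n ⊆ f m := by
    intro n m h u hu
    rw [hres h] at hu
    exact hu.1
  have hkey : ∀ {m : ℕ} {u : PNode}, u ∈ f m → ∀ {β : Ordinal}, IsNode u β →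
      ∀ {n : ℕ}, β < theight (f n) → u ∈ f n := by
    intro m u hu β hβ n hn
    rcases le_total m n with h | h
    · exact hmono h hu
    · rw [hres h]
      exact ⟨hu, β, hn, hβ⟩
  have hmemS : ∀ {u : PNode}, u ∈ S → ∃ n, u ∈ f n := by
    intro u hu
    exact Set.mem_iUnion.mp hu
  have hinS : ∀ {n : ℕ} {u : PNode}, u ∈ f n → u ∈ S := by
    intro n u hu
    exact Set.mem_iUnion.mpr ⟨n, hu⟩
  have hSub : Subtree S := by
    constructor
    · intro u hu
      obtain ⟨n, hn⟩ := hmemS hu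
      exact (hsub n).1 u hn
    · intro u hu δ
      obtain ⟨n, hn⟩ := hmemS hu
      exact hinS ((hsub n).2 u hn δ)
  have hlevS : ∀ {α : Ordinal} {n : ℕ}, α < theight (f n) → tlevel S α = tlevel (f n) α := by
    intro α n hα
    ext u
    constructor
    · rintro ⟨huS, hnode⟩
      obtain ⟨m, hm⟩ := hmemS huS
      exact ⟨hkey hm hnode hα, hnode⟩
    · rintro ⟨hu, hnode⟩
      exact ⟨hinS hu, hnode⟩
  have hhle : ∀ n, theight (f n) ≤ theight S := by
    intro n
    refine le_csInf (height_set_nonempty hSub) ?_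
    intro b hb
    by_contra hlt
    push_neg at hlt
    obtain ⟨u, hu⟩ := level_nonempty (T := f n) hlt
    have : u ∈ tlevel S b := ⟨hinS hu.1, hu.2⟩
    rw [Set.mem_setOf_eq.mp hb] at this
    exact this
  have hcof : ∀ {α : Ordinal}, α < theight S → ∃ n, α < theight (f n) := by
    intro α hα
    obtain ⟨u, huS, hnode⟩ := level_nonempty hα
    obtain ⟨m, hm⟩ := hmemS huS
    exact ⟨m, level_lt_height (hsub m) hm hnode⟩
  have hTle : ∀ n, Tle S (f n) := by
    intro n
    refine ⟨hhle n, ?_⟩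
    ext u
    constructor
    · intro hu
      obtain ⟨β, _, hβ⟩ := (hsub n).1 u hu
      exact ⟨hinS hu, β, level_lt_height (hsub n) hu hβ, hβ⟩
    · rintro ⟨huS, β, hβn, hβ⟩
      obtain ⟨m, hm⟩ := hmemS huS
      exact hkey hm hβ hβn
  refine ⟨S, ⟨?_, hSub, ⟨?_, ?_, ?_⟩, ?_⟩, hTle⟩
  · exact Set.countable_iUnion fun n => (hf n).1
  · -- splitting
    intro u huS β hβ hβ1
    obtain ⟨n, hn⟩ := hcof hβ1
    obtain ⟨m, hm⟩ := hmemS huS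
    have hun : u ∈ f n := hkey hm hβ (lt_trans (Order.lt_succ_of_le (le_refl β) |>.trans_le le_rfl) hn)
    obtain ⟨v, hv, w, hw, hvw, huv, huw⟩ :=
      (hf n).2.2.1.1 u hun β hβ hn
    rw [← hlevS hn] at hv hw
    exact ⟨v, hv, w, hw, hvw, huv, huw⟩
  · -- limit uniqueness
    intro α hlim v hv w hw hpred
    obtain ⟨a, ha⟩ := hmemS hv.1
    obtain ⟨b, hb⟩ := hmemS hw.1
    set n := max a b with hn
    have hvn : v ∈ f n := hmono (le_max_left a b) ha
    have hwn : w ∈ f n := hmono (le_max_right a b) hb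
    have hαn : α < theight (f n) := level_lt_height (hsub n) hvn hv.2
    have htrans : ∀ z ∈ tlevel (f n) α,
        {u ∈ f n | extn u z ∧ u ≠ z} = {u ∈ S | extn u z ∧ u ≠ z} := by
      intro z hz
      ext u
      constructor
      · rintro ⟨hu, he, hne⟩
        exact ⟨hinS hu, he, hne⟩
      · rintro ⟨huS, he, hne⟩
        obtain ⟨m, hm⟩ := hmemS huS
        obtain ⟨β, _, hβ⟩ := (hsub m).1 u hm
        have hβα : β < α := extn_lt he hβ hz.2 hne
        exact ⟨hkey hm hβ (hβα.trans hαn), he, hne⟩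
    refine (hf n).2.2.1.2.1 α hlim v ⟨hvn, hv.2⟩ w ⟨hwn, hw.2⟩ ?_
    rw [htrans v ⟨hvn, hv.2⟩, htrans w ⟨hwn, hw.2⟩]
    exact hpred
  · -- extension to higher levels
    intro u huS β hβ α hβα hα
    obtain ⟨n, hn⟩ := hcof hα
    obtain ⟨m, hm⟩ := hmemS huS
    have hun : u ∈ f n := hkey hm hβ (lt_of_le_of_lt hβα hn)
    obtain ⟨v, hv, huv⟩ := (hf n).2.2.1.2.2 u hun β hβ α hβα hn
    rw [← hlevS hn] at hv
    exact ⟨v, hv, huv⟩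
  · -- homogeneity
    intro α s hs t ht
    obtain ⟨a, ha⟩ := hmemS hs.1
    obtain ⟨b, hb⟩ := hmemS ht.1
    have hst : ∀ {k : ℕ}, a ≤ k → b ≤ k →
        s ∈ tlevel (f k) α ∧ t ∈ tlevel (f k) α := by
      intro k hak hbk
      exact ⟨⟨hmono hak ha, hs.2⟩, ⟨hmono hbk hb, ht.2⟩⟩
    have hH : ∀ {k : ℕ}, a ≤ k → b ≤ k →
        Set.BijOn (Fmap α s t) (f k) (f k) ∧
        ∀ u ∈ f k, ∀ v ∈ f k, (extn u v ↔ extn (Fmap α s t u) (Fmap α s t v)) := by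
      intro k hak hbk
      exact (hf k).2.2.2 α s (hst hak hbk).1 t (hst hak hbk).2
    constructor
    · refine ⟨?_, ?_, ?_⟩
      · intro u hu
        obtain ⟨m, hm⟩ := hmemS hu
        have hk : u ∈ f (max (max a b) m) := hmono (le_max_right _ m) hm
        exact hinS ((hH ((le_max_left a b).trans (le_max_left _ m))
          ((le_max_right a b).trans (le_max_left _ m))).1.1 hk)
      · intro u hu v hv he
        obtain ⟨mu, hmu⟩ := hmemS hu
        obtain ⟨mv, hmv⟩ := hmemS hv
        set k := max (max a b) (max mu mv) with hkdef
        exact (hH ((le_max_left a b).trans (le_max_left _ _))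
          ((le_max_right a b).trans (le_max_left _ _))).1.2.1
          (hmono ((le_max_left mu mv).trans (le_max_right _ _)) hmu)
          (hmono ((le_max_right mu mv).trans (le_max_right _ _)) hmv) he
      · intro u hu
        obtain ⟨m, hm⟩ := hmemS hu
        obtain ⟨w, hw, hwe⟩ := (hH ((le_max_left a b).trans (le_max_left _ m))
          ((le_max_right a b).trans (le_max_left _ m))).1.2.2
          (hmono (le_max_right (max a b) m) hm)
        exact ⟨w, hinS hw, hwe⟩
    · intro u hu v hv
      obtain ⟨mu, hmu⟩ := hmemS hu
      obtain ⟨mv, hmv⟩ := hmemS hv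
      exact (hH ((le_max_left a b).trans (le_max_left _ (max mu mv)))
        ((le_max_right a b).trans (le_max_left _ _))).2
        u (hmono ((le_max_left mu mv).trans (le_max_right _ _)) hmu)
        v (hmono ((le_max_right mu mv).trans (le_max_right _ _)) hmv)


end
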